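/- In the Top Trading Cycles rule with n agents each initially owning one distinct object, for any two agents i and j there exists an opposing preference profile R_{-i} such that i's menu for j is the entire object set: {φ_j(R_i, R_{-i}) : R_i} = O. -/

import Mathlib

section TTC
variable {n : ℕ}

noncomputable def mkPerm (f : Fin n → Fin n) (hf : Function.Injective f) : Fin n ≃ Fin n :=
  Equiv.ofBijective f (Finite.injective_iff_bijective.mp hf)

@[simp] lemma mkPerm_apply (f : Fin n → Fin n) (hf) (x : Fin n) : mkPerm f hf x = f x := rfl

def Hcore (ω : Fin n ≃ Fin n) (φ : (Fin n → (Fin n ≃ Fin n)) → (Fin n ≃ Fin n)) : Prop :=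
  ∀ (R : Fin n → (Fin n ≃ Fin n)) (S : Finset (Fin n)) (μ : Fin n ≃ Fin n),
      (∀ i ∈ S, μ i ∈ S.image ω) →
      (∀ i ∈ S, ((R i) (μ i) : ℕ) ≤ (R i) (φ R i)) →
      ∀ i ∈ S, μ i = φ R i

lemma round_lemma {ω : Fin n ≃ Fin n} {φ} (hcore : Hcore ω φ)
    (R : Fin n → (Fin n ≃ Fin n)) (μ : Fin n ≃ Fin n) (T S : Finset (Fin n))
    (hd : ∀ k ∈ T, k ∉ S)
    (hT : ∀ k ∈ T, φ R k = μ k)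
    (hS : ∀ k ∈ S, μ k ∈ S.image ω)
    (hb : ∀ k ∈ S, ∀ o : Fin n, ((R k) o : ℕ) < (R k) (μ k) → ∃ a ∈ T, μ a = o) :
    ∀ k ∈ S, φ R k = μ k := by
  have hrank : ∀ k ∈ S, ((R k) (μ k) : ℕ) ≤ (R k) (φ R k) := by
    intro k hk
    by_contra h
    push_neg at h
    obtain ⟨a, haT, ha⟩ := hb k hk (φ R k) h
    have h1 : φ R a = φ R k := by rw [hT a haT, ha]
    have h2 : a = k := (φ R).injective h1
    exact hd a haT (h2 ▸ hk)
  intro k hk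
  exact (hcore R S μ hS hrank k hk).symm

def rmid (t : ℕ) (s : Fin n) : Fin n :=
  ⟨if s.val = 0 then n-2-t else if s.val = n-1 then n-1-t
    else if t < s.val then s.val - (t+1) else n-1-t+s.val, by
      have := s.isLt; split_ifs <;> omega⟩

lemma rmid_inj (t : ℕ) (ht : t ≤ n-2) : Function.Injective (rmid (n := n) t) := by
  intro a b h
  have ha := a.isLt; have hb := b.isLt
  apply Fin.ext
  simp only [rmid, Fin.mk.injEq] at h
  split_ifs at h <;> omega

def rj (s : Fin n) : Fin n :=
  ⟨if s.val = 0 then 0 else if s.val = n-1 then n-1 else n-1-s.val, by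
      have := s.isLt; split_ifs <;> omega⟩

lemma rj_inj : Function.Injective (rj (n := n)) := by
  intro a b h
  have ha := a.isLt; have hb := b.isLt
  apply Fin.ext
  simp only [rj, Fin.mk.injEq] at h
  split_ifs at h <;> omega

def r0 (q : Fin n) (s : Fin n) : Fin n :=
  ⟨if s.val = q.val then 0 else if s.val < q.val then s.val + 1 else s.val, by
      have := s.isLt; have := q.isLt; split_ifs <;> omega⟩

lemma r0_inj (q : Fin n) : Function.Injective (r0 (n := n) q) := by
  intro a b h
  have ha := a.isLt; have hb := b.isLt
  apply Fin.ext
  simp only [r0, Fin.mk.injEq] at h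
  split_ifs at h <;> omega

/-- ranking equiv of the (non-`i`) agent at position `t`. -/
noncomputable def rankPos (t : Fin n) : Fin n ≃ Fin n :=
  if h : t.val = n-1 then mkPerm rj rj_inj
  else mkPerm (rmid t.val) (rmid_inj t.val (by have := t.isLt; omega))

/-- base profile in agent space -/
noncomputable def Rbase (ω e : Fin n ≃ Fin n) : Fin n → (Fin n ≃ Fin n) :=
  fun k => ω.symm.trans ((e.symm).trans (rankPos (e.symm k)))

/-- report of agent `i` pointing at object-position `q` -/
noncomputable def rep (ω e : Fin n ≃ Fin n) (q : Fin n) : Fin n ≃ Fin n :=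
  ω.symm.trans ((e.symm).trans (mkPerm (r0 q) (r0_inj q)))

/-- the updated profile -/
noncomputable def Rq (ω e : Fin n ≃ Fin n) (i q : Fin n) : Fin n → (Fin n ≃ Fin n) :=
  Function.update (Rbase ω e) i (rep ω e q)

/-- rank table in position space -/
def rnk (q t s : Fin n) : Fin n :=
  if t.val = 0 then r0 q s else if t.val = n-1 then rj s else rmid t.val s

lemma Rq_eval (ω e : Fin n ≃ Fin n) (i q t s : Fin n) (hi : (e.symm i).val = 0) :
    ((Rq ω e i q (e t)) (ω (e s)) : ℕ) = (rnk q t s).val := by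
  unfold Rq rnk
  by_cases h : t.val = 0
  · have ht : t = e.symm i := by apply Fin.ext; omega
    have : e t = i := by rw [ht]; simp
    rw [this, Function.update_self]
    simp [rep, h]
  · have hne : e t ≠ i := by
      intro hc
      apply h
      have : t = e.symm i := by rw [← hc]; simp
      omega
    rw [Function.update_of_ne hne]
    simp only [Rbase, Equiv.trans_apply, Equiv.symm_apply_apply]
    unfold rankPos
    by_cases h2 : t.val = n-1
    · rw [dif_pos h2, if_neg h, if_pos h2]; rfl
    · rw [dif_neg h2, if_neg h, if_neg h2]; rfl

/-- global assignment in agent space from a position permutation -/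
noncomputable def assign (ω e πE : Fin n ≃ Fin n) : Fin n ≃ Fin n :=
  e.symm.trans (πE.trans (e.trans ω))

lemma assign_apply (ω e πE : Fin n ≃ Fin n) (t : Fin n) :
    assign ω e πE (e t) = ω (e (πE t)) := by simp [assign]

lemma posRound {ω : Fin n ≃ Fin n} {φ} (hcore : Hcore ω φ) (e : Fin n ≃ Fin n)
    (i q : Fin n) (hi : (e.symm i).val = 0) (πE : Fin n ≃ Fin n)
    (Cprev C : Finset (Fin n))
    (hprev : ∀ t ∈ Cprev, φ (Rq ω e i q) (e t) = assign ω e πE (e t))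
    (hd : ∀ t ∈ Cprev, t ∉ C)
    (hCp : ∀ t ∈ Cprev, πE t ∈ Cprev)
    (hC : ∀ t ∈ C, πE t ∈ C)
    (hb : ∀ t ∈ C, ∀ s : Fin n, (rnk q t s).val < (rnk q t (πE t)).val → s ∈ Cprev) :
    ∀ t ∈ C, φ (Rq ω e i q) (e t) = assign ω e πE (e t) := by
  have himg : Cprev.image πE = Cprev := by
    apply Finset.eq_of_subset_of_card_le
    · intro x hx
      obtain ⟨a, ha, rfl⟩ := Finset.mem_image.mp hx
      exact hCp a ha
    · rw [Finset.card_image_of_injective _ πE.injective]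
  have main := round_lemma hcore (Rq ω e i q) (assign ω e πE)
      (Cprev.image e) (C.image e)
      (by
        intro k hk hkS
        obtain ⟨a, ha, rfl⟩ := Finset.mem_image.mp hk
        obtain ⟨b, hb', hba⟩ := Finset.mem_image.mp hkS
        have : b = a := e.injective hba
        exact hd a ha (this ▸ hb'))
      (by
        intro k hk
        obtain ⟨a, ha, rfl⟩ := Finset.mem_image.mp hk
        exact hprev a ha)
      (by
        intro k hk
        obtain ⟨a, ha, rfl⟩ := Finset.mem_image.mp hk
        rw [assign_apply]
        exact Finset.mem_image.mpr ⟨e (πE a), Finset.mem_image.mpr ⟨πE a, hC a ha, rfl⟩, rfl⟩)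
      (by
        intro k hk o hlt
        obtain ⟨a, ha, rfl⟩ := Finset.mem_image.mp hk
        set s : Fin n := e.symm (ω.symm o) with hs
        have ho : o = ω (e s) := by simp [hs]
        rw [ho, Rq_eval ω e i q a s hi] at hlt
        rw [assign_apply, Rq_eval ω e i q a (πE a) hi] at hlt
        have hsC : s ∈ Cprev := hb a ha s hlt
        have : s ∈ Cprev.image πE := by rw [himg]; exact hsC
        obtain ⟨u, hu, hus⟩ := Finset.mem_image.mp this
        exact ⟨e u, Finset.mem_image.mpr ⟨u, hu, rfl⟩, by rw [assign_apply, hus, ← ho]⟩)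
  intro t ht
  exact main (e t) (Finset.mem_image.mpr ⟨t, ht, rfl⟩)

end TTC

set_option maxHeartbeats 3200000

section Cases
variable {n : ℕ}

def piL (s : Fin n) : Fin n :=
  ⟨if s.val = 0 then n-1 else if s.val = n-1 then 0 else if s.val = n-2 then 1
    else s.val + 1, by have := s.isLt; split_ifs <;> first | omega | exact (by assumption : False).elim⟩

lemma piL_inj (hn : 2 ≤ n) : Function.Injective (piL (n := n)) := by
  intro a b h
  have ha := a.isLt; have hb := b.isLt
  apply Fin.ext
  simp only [piL, Fin.mk.injEq] at h
  split_ifs at h <;> omega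

lemma case_piL {ω : Fin n ≃ Fin n} {φ} (hcore : Hcore ω φ) (e : Fin n ≃ Fin n)
    (i j q s0 : Fin n) (hn : 2 ≤ n) (hi : (e.symm i).val = 0) (hj : (e.symm j).val = n-1)
    (hq : q.val = n-1) (hs0 : s0.val = 0) :
    φ (Rq ω e i q) j = ω (e s0) := by
  have r1 := posRound hcore e i q hi (mkPerm piL (piL_inj hn))
    ∅ (Finset.univ.filter (fun t => t.val = 0 ∨ t.val = n-1))
    (by simp) (by simp) (by simp)
    (by
      intro t ht
      simp only [Finset.mem_filter, Finset.mem_univ, true_and, mkPerm_apply, piL, Fin.val_mk, apply_ite Fin.val] at ht ⊢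
      split_ifs <;> first | omega | exact (by assumption : False).elim)
    (by
      intro t ht s hlt
      exfalso
      simp only [Finset.mem_filter, Finset.mem_univ, true_and] at ht
      simp only [mkPerm_apply, rnk, r0, rj, rmid, piL, Fin.val_mk, apply_ite Fin.val] at hlt
      have hsl := s.isLt; have htl := t.isLt
      split_ifs at hlt <;> first | omega | exact (by assumption : False).elim)
  have hfin := r1 (e.symm j) (by
    simp only [Finset.mem_filter, Finset.mem_univ, true_and]; omega)
  rw [assign_apply, e.apply_symm_apply] at hfin
  rw [hfin]
  congr 2
  apply Fin.ext
  simp only [mkPerm_apply, piL, Fin.val_mk, apply_ite Fin.val]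
  split_ifs <;> first | omega | exact (by assumption : False).elim

def pi0 (s : Fin n) : Fin n :=
  ⟨if s.val = 0 then 0 else if s.val = n-1 then n-2 else if s.val = n-2 then n-1
    else if s.val = n-3 then 1 else s.val + 1, by have := s.isLt; split_ifs <;> first | omega | exact (by assumption : False).elim⟩

lemma pi0_inj (hn : 3 ≤ n) : Function.Injective (pi0 (n := n)) := by
  intro a b h
  have ha := a.isLt; have hb := b.isLt
  apply Fin.ext
  simp only [pi0, Fin.mk.injEq] at h
  split_ifs at h <;> omega

lemma case_pi0 {ω : Fin n ≃ Fin n} {φ} (hcore : Hcore ω φ) (e : Fin n ≃ Fin n)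
    (i j q sout : Fin n) (hn : 3 ≤ n) (hi : (e.symm i).val = 0) (hj : (e.symm j).val = n-1)
    (hq : q.val = 0) (hs : sout.val = n-2) :
    φ (Rq ω e i q) j = ω (e sout) := by
  have r1 := posRound hcore e i q hi (mkPerm pi0 (pi0_inj hn))
    ∅ (Finset.univ.filter (fun t => t.val = 0))
    (by simp) (by simp) (by simp)
    (by
      intro t ht
      simp only [Finset.mem_filter, Finset.mem_univ, true_and, mkPerm_apply, pi0, Fin.val_mk, apply_ite Fin.val] at ht ⊢
      split_ifs <;> first | omega | exact (by assumption : False).elim)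
    (by
      intro t ht s hlt
      exfalso
      simp only [Finset.mem_filter, Finset.mem_univ, true_and] at ht
      simp only [mkPerm_apply, rnk, r0, rj, rmid, pi0, Fin.val_mk, apply_ite Fin.val] at hlt
      have hsl := s.isLt; have htl := t.isLt
      split_ifs at hlt <;> first | omega | exact (by assumption : False).elim)
  have r2 := posRound hcore e i q hi (mkPerm pi0 (pi0_inj hn))
    (Finset.univ.filter (fun t => t.val = 0))
    (Finset.univ.filter (fun t => t.val = n-2 ∨ t.val = n-1))
    r1
    (by
      intro t ht
      simp only [Finset.mem_filter, Finset.mem_univ, true_and] at ht ⊢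
      omega)
    (by
      intro t ht
      simp only [Finset.mem_filter, Finset.mem_univ, true_and, mkPerm_apply, pi0, Fin.val_mk, apply_ite Fin.val] at ht ⊢
      split_ifs <;> first | omega | exact (by assumption : False).elim)
    (by
      intro t ht
      simp only [Finset.mem_filter, Finset.mem_univ, true_and, mkPerm_apply, pi0, Fin.val_mk, apply_ite Fin.val] at ht ⊢
      split_ifs <;> first | omega | exact (by assumption : False).elim)
    (by
      intro t ht s hlt
      simp only [Finset.mem_filter, Finset.mem_univ, true_and] at ht ⊢
      simp only [mkPerm_apply, rnk, r0, rj, rmid, pi0, Fin.val_mk, apply_ite Fin.val] at hlt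
      have hsl := s.isLt; have htl := t.isLt
      split_ifs at hlt <;> first | omega | exact (by assumption : False).elim)
  have hfin := r2 (e.symm j) (by
    simp only [Finset.mem_filter, Finset.mem_univ, true_and]; omega)
  rw [assign_apply, e.apply_symm_apply] at hfin
  rw [hfin]
  congr 2
  apply Fin.ext
  simp only [mkPerm_apply, pi0, Fin.val_mk, apply_ite Fin.val]
  split_ifs <;> first | omega | exact (by assumption : False).elim

def pimid (t0 : Fin n) (s : Fin n) : Fin n :=
  ⟨if s.val = 0 then t0.val
    else if s.val = n-1 then (if t0.val = 1 then n-1 else t0.val - 1)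
    else if s.val = n-2 then 0
    else if s.val = t0.val - 1 then n-1
    else if s.val = t0.val - 2 then 1
    else s.val + 1, by have := s.isLt; have := t0.isLt; split_ifs <;> first | omega | exact (by assumption : False).elim⟩

lemma pimid_inj (t0 : Fin n) (h1 : 1 ≤ t0.val) (h2 : t0.val ≤ n-2) :
    Function.Injective (pimid (n := n) t0) := by
  intro a b h
  have ha := a.isLt; have hb := b.isLt; have ht := t0.isLt
  apply Fin.ext
  simp only [pimid, Fin.mk.injEq] at h
  split_ifs at h <;> omega

lemma case_pimid {ω : Fin n ≃ Fin n} {φ} (hcore : Hcore ω φ) (e : Fin n ≃ Fin n)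
    (i j : Fin n) (t0 sout : Fin n) (h1 : 1 ≤ t0.val) (h2 : t0.val ≤ n-2)
    (hi : (e.symm i).val = 0) (hj : (e.symm j).val = n-1)
    (hs : (t0.val = 1 ∧ sout.val = n-1) ∨ (2 ≤ t0.val ∧ sout.val = t0.val - 1)) :
    φ (Rq ω e i t0) j = ω (e sout) := by
  have hn : 3 ≤ n := by omega
  have r1 := posRound hcore e i t0 hi (mkPerm (pimid t0) (pimid_inj t0 h1 h2))
    ∅ (Finset.univ.filter (fun t => t.val = 0 ∨ (t0.val ≤ t.val ∧ t.val ≤ n-2)))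
    (by simp) (by simp) (by simp)
    (by
      intro t ht
      simp only [Finset.mem_filter, Finset.mem_univ, true_and, mkPerm_apply, pimid, Fin.val_mk, apply_ite Fin.val] at ht ⊢
      split_ifs <;> first | omega | exact (by assumption : False).elim)
    (by
      intro t ht s hlt
      exfalso
      simp only [Finset.mem_filter, Finset.mem_univ, true_and] at ht
      simp only [mkPerm_apply, rnk, r0, rj, rmid, pimid, Fin.val_mk, apply_ite Fin.val] at hlt
      have hsl := s.isLt; have htl := t.isLt
      split_ifs at hlt <;> first | omega | exact (by assumption : False).elim)
  have r2 := posRound hcore e i t0 hi (mkPerm (pimid t0) (pimid_inj t0 h1 h2))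
    (Finset.univ.filter (fun t => t.val = 0 ∨ (t0.val ≤ t.val ∧ t.val ≤ n-2)))
    (Finset.univ.filter (fun t => t.val = n-1 ∨ (2 ≤ t0.val ∧ t.val = t0.val - 1)))
    r1
    (by
      intro t ht
      simp only [Finset.mem_filter, Finset.mem_univ, true_and] at ht ⊢
      omega)
    (by
      intro t ht
      simp only [Finset.mem_filter, Finset.mem_univ, true_and, mkPerm_apply, pimid, Fin.val_mk, apply_ite Fin.val] at ht ⊢
      split_ifs <;> first | omega | exact (by assumption : False).elim)
    (by
      intro t ht
      simp only [Finset.mem_filter, Finset.mem_univ, true_and, mkPerm_apply, pimid, Fin.val_mk, apply_ite Fin.val] at ht ⊢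
      split_ifs <;> first | omega | exact (by assumption : False).elim)
    (by
      intro t ht s hlt
      simp only [Finset.mem_filter, Finset.mem_univ, true_and] at ht ⊢
      simp only [mkPerm_apply, rnk, r0, rj, rmid, pimid, Fin.val_mk, apply_ite Fin.val] at hlt
      have hsl := s.isLt; have htl := t.isLt
      split_ifs at hlt <;> first | omega | exact (by assumption : False).elim)
  have hfin := r2 (e.symm j) (by
    simp only [Finset.mem_filter, Finset.mem_univ, true_and]; omega)
  rw [assign_apply, e.apply_symm_apply] at hfin
  rw [hfin]
  congr 2
  apply Fin.ext
  simp only [mkPerm_apply, pimid, Fin.val_mk, apply_ite Fin.val]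
  split_ifs <;> first | omega | exact (by assumption : False).elim

end Cases

lemma Rq_def {n : ℕ} (ω e : Fin n ≃ Fin n) (i q : Fin n) :
    Rq ω e i q = Function.update (Rbase ω e) i (rep ω e q) := rfl

set_option maxHeartbeats 3200000 in
/-- let `φ` be the Top Trading Cycles rule with endowment `ω`
(agent `k` initially owns object `ω k`), characterised (à la Roth–Postlewaite, for
strict preferences) as the rule whose outcome at every profile is the unique strong
core allocation: no coalition `S` can reallocate its own endowments so that every
member is weakly better off unless this leaves every member's assignment unchanged.
Then for any two agents `i`, `j` there is an opposing profile at which `i`'s menu for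
`j` is the whole object set: varying `i`'s report ranges `j`'s assignment over all
objects.  (Preferences are rankings `σ : Fin n ≃ Fin n`, `x ≻ y ↔ σ x < σ y`.) -/
theorem stmt_11 (n : ℕ) (ω : Fin n ≃ Fin n)
    (φ : (Fin n → (Fin n ≃ Fin n)) → (Fin n ≃ Fin n))
    (hcore : ∀ (R : Fin n → (Fin n ≃ Fin n)) (S : Finset (Fin n)) (μ : Fin n ≃ Fin n),
      (∀ i ∈ S, μ i ∈ S.image ω) →
      (∀ i ∈ S, ((R i) (μ i) : ℕ) ≤ (R i) (φ R i)) →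
      ∀ i ∈ S, μ i = φ R i) :
    ∀ i j : Fin n, ∃ R : Fin n → (Fin n ≃ Fin n),
      {o : Fin n | ∃ r', o = φ (Function.update R i r') j} = Set.univ := by
  intro i j
  have hcore' : Hcore ω φ := hcore
  have hn1 : 1 ≤ n := by have := i.isLt; omega
  by_cases hij : i = j
  · -- i's own menu is full: everyone top-ranks ω i
    subst hij
    refine ⟨fun _ => ω.symm.trans (Equiv.swap ⟨0, by omega⟩ i), ?_⟩
    rw [Set.eq_univ_iff_forall]
    intro o
    set m : Fin n := ω.symm o with hm
    refine ⟨ω.symm.trans (Equiv.swap ⟨0, by omega⟩ m), ?_⟩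
    set R' := Function.update (fun _ : Fin n => ω.symm.trans (Equiv.swap ⟨0, by omega⟩ i)) i
      (ω.symm.trans (Equiv.swap ⟨0, by omega⟩ m)) with hR'
    have hzero : ∀ k ∈ ({i, m} : Finset (Fin n)),
        ((R' k) (((Equiv.swap i m).trans ω) k) : ℕ) = 0 := by
      have hi0 : ((R' i) (((Equiv.swap i m).trans ω) i) : ℕ) = 0 := by
        rw [hR', Function.update_self]
        simp [Equiv.swap_apply_left]
      intro k hk
      simp only [Finset.mem_insert, Finset.mem_singleton] at hk
      rcases hk with rfl | rfl
      · exact hi0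
      · by_cases hmi : m = i
        · rw [hmi]
          rw [hR', Function.update_self]
          simp only [Equiv.trans_apply, Equiv.swap_self, Equiv.refl_apply,
            Equiv.symm_apply_apply]
          rw [show (i : Fin n) = m from hmi.symm, Equiv.swap_apply_right]
        · rw [hR', Function.update_of_ne hmi]
          simp [Equiv.swap_apply_right]
    have key := round_lemma hcore' R' ((Equiv.swap i m).trans ω) ∅ {i, m}
      (by simp) (by simp)
      (by
        intro k hk
        simp only [Finset.mem_insert, Finset.mem_singleton] at hk
        rcases hk with rfl | rfl
        · simp only [Equiv.trans_apply, Equiv.swap_apply_left]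
          exact Finset.mem_image_of_mem ω (by simp)
        · simp only [Equiv.trans_apply, Equiv.swap_apply_right]
          exact Finset.mem_image_of_mem ω (by simp))
      (by
        intro k hk o' hlt
        exfalso
        rw [hzero k hk] at hlt
        exact Nat.not_lt_zero _ hlt)
    have hkey := key i (by simp)
    rw [hkey]
    simp [hm, Equiv.swap_apply_left]
  · -- i ≠ j
    have hn2 : 2 ≤ n := by
      by_contra h
      push_neg at h
      exact hij (Fin.ext (by have := i.isLt; have := j.isLt; omega))
    -- build the relabelling equiv e with e ⟨0⟩ = i and e ⟨n-1⟩ = j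
    set p0 : Fin n := ⟨0, by omega⟩ with hp0def
    set pL : Fin n := ⟨n-1, by omega⟩ with hpLdef
    have hp0pL : p0 ≠ pL := by
      intro h
      have := congrArg Fin.val h
      simp [hp0def, hpLdef] at this
      omega
    set e1 := Equiv.swap p0 i with he1
    set a : Fin n := e1.symm j with hadef
    have hap0 : a ≠ p0 := by
      intro h
      apply hij
      have h1 : e1 a = j := e1.apply_symm_apply j
      rw [h, he1, Equiv.swap_apply_left] at h1
      exact h1
    set e := (Equiv.swap pL a).trans e1 with he
    have hep0 : e p0 = i := by
      rw [he, Equiv.trans_apply, Equiv.swap_apply_of_ne_of_ne hp0pL (Ne.symm hap0), he1,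
        Equiv.swap_apply_left]
    have hepL : e pL = j := by
      rw [he, Equiv.trans_apply, Equiv.swap_apply_left, hadef, Equiv.apply_symm_apply]
    have hi : (e.symm i).val = 0 := by rw [← hep0, Equiv.symm_apply_apply, hp0def]
    have hj : (e.symm j).val = n-1 := by rw [← hepL, Equiv.symm_apply_apply, hpLdef]
    refine ⟨Rbase ω e, ?_⟩
    rw [Set.eq_univ_iff_forall]
    intro o
    set s : Fin n := e.symm (ω.symm o) with hsdef
    have ho : o = ω (e s) := by rw [hsdef]; simp
    have hslt : s.val < n := s.isLt
    by_cases hs0 : s.val = 0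
    · -- i points at j's object; they swap; j gets ω (e ⟨0⟩) = o
      refine ⟨rep ω e (e.symm j), ?_⟩
      rw [ho, ← Rq_def]
      exact (case_piL hcore' e i j (e.symm j) s hn2 hi hj hj hs0).symm
    by_cases hsL : s.val = n-1
    · by_cases hn2' : n = 2
      · -- n = 2 : i points at own object, j keeps own
        refine ⟨rep ω e (e.symm i), ?_⟩
        rw [ho, ← Rq_def]
        have k1 := posRound hcore' e i (e.symm i) hi (Equiv.refl _)
          ∅ (Finset.univ.filter (fun t : Fin n => t.val = 0))
          (by simp) (by simp) (by simp)
          (by intro t ht; simpa using ht)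
          (by
            intro t ht s' hlt
            exfalso
            simp only [Finset.mem_filter, Finset.mem_univ, true_and] at ht
            rw [Equiv.refl_apply] at hlt
            simp only [Equiv.refl_apply, rnk, r0, rj, rmid, Fin.val_mk,
              apply_ite Fin.val] at hlt
            have := s'.isLt
            split_ifs at hlt <;> first | omega | exact (by assumption : False).elim)
        have k2 := posRound hcore' e i (e.symm i) hi (Equiv.refl _)
          (Finset.univ.filter (fun t : Fin n => t.val = 0))
          (Finset.univ.filter (fun t : Fin n => t.val = n-1))
          k1
          (by
            intro t ht
            simp only [Finset.mem_filter, Finset.mem_univ, true_and] at ht ⊢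
            omega)
          (by intro t ht; simpa using ht)
          (by intro t ht; simpa using ht)
          (by
            intro t ht s' hlt
            simp only [Finset.mem_filter, Finset.mem_univ, true_and] at ht ⊢
            rw [Equiv.refl_apply] at hlt
            simp only [Equiv.refl_apply, rnk, r0, rj, rmid, Fin.val_mk,
              apply_ite Fin.val] at hlt
            have := s'.isLt; have := t.isLt
            split_ifs at hlt <;> first | omega | exact (by assumption : False).elim)
        have hfin := k2 (e.symm j) (by
          simp only [Finset.mem_filter, Finset.mem_univ, true_and]; omega)
        rw [assign_apply] at hfin
        simp only [Equiv.refl_apply, Equiv.apply_symm_apply] at hfin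
        have hsj : s = e.symm j := Fin.ext (by omega)
        rw [hsj, Equiv.apply_symm_apply]
        exact hfin.symm
      · -- n ≥ 3 : i points at the object of middle position 1; j keeps own
        obtain ⟨t1, ht1⟩ : ∃ t : Fin n, t.val = 1 := ⟨⟨1, by omega⟩, rfl⟩
        refine ⟨rep ω e t1, ?_⟩
        rw [ho, ← Rq_def]
        exact (case_pimid hcore' e i j t1 s (by omega) (by omega) hi hj
          (Or.inl ⟨ht1, hsL⟩)).symm
    by_cases hsN2 : s.val = n-2
    · -- i points at own object
      refine ⟨rep ω e (e.symm i), ?_⟩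
      rw [ho, ← Rq_def]
      exact (case_pi0 hcore' e i j (e.symm i) s (by omega) hi hj hi hsN2).symm
    · -- generic: i points at position s+1
      obtain ⟨t0, ht0⟩ : ∃ t : Fin n, t.val = s.val + 1 := ⟨⟨s.val + 1, by omega⟩, rfl⟩
      refine ⟨rep ω e t0, ?_⟩
      rw [ho, ← Rq_def]
      exact (case_pimid hcore' e i j t0 s (by omega) (by omega) hi hj
        (Or.inr ⟨by omega, by omega⟩)).symm
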